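/- Let g : (0,∞) → ℝ be continuously differentiable. Suppose every critical point of g is a strict local maximum. Then g has at most one critical point, and if s₀ is a critical point, then g attains its global maximum over (0,∞) at s₀ provided additionally g(s) → −∞ as s → ∞ and g(s) → g(0⁺) with g(s₀) > limsup_{s→0⁺} g(s). -/
import Mathlib


/-- A `C¹` function on `(0,∞)` all of whose critical points are strict local
maxima has at most one critical point; and if moreover `g → −∞` at `∞` and
`g(s₀) > limsup_{s→0⁺} g(s)` at a critical point `s₀`, then `g` attains its global
maximum over `(0,∞)` at `s₀`. -/
theorem stmt_4 (g g' : ℝ → ℝ)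
    (hderiv : ∀ s ∈ Set.Ioi (0:ℝ), HasDerivAt g (g' s) s)
    (hcont : ContinuousOn g' (Set.Ioi 0))
    (hmax : ∀ s ∈ Set.Ioi (0:ℝ), g' s = 0 →
      ∃ ε > (0:ℝ), ∀ t ∈ Set.Ioi (0:ℝ), t ≠ s → |t - s| < ε → g t < g s) :
    (∀ s₁ ∈ Set.Ioi (0:ℝ), ∀ s₂ ∈ Set.Ioi (0:ℝ), g' s₁ = 0 → g' s₂ = 0 → s₁ = s₂) ∧
    (Filter.Tendsto g Filter.atTop Filter.atBot →
      ∀ s₀ ∈ Set.Ioi (0:ℝ), g' s₀ = 0 →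
        g s₀ > Filter.limsup g (nhdsWithin 0 (Set.Ioi 0)) →
        ∀ s ∈ Set.Ioi (0:ℝ), g s ≤ g s₀) := by
  -- continuity of g on compact subintervals of (0,∞)
  have hC : ∀ a b : ℝ, 0 < a → ContinuousOn g (Set.Icc a b) := by
    intro a b ha x hx
    exact ((hderiv x (lt_of_lt_of_le ha hx.1)).continuousAt).continuousWithinAt
  -- interior minimum on a compact interval gives a critical point
  have dmin : ∀ a b c : ℝ, 0 < a → c ∈ Set.Ioo a b → IsMinOn g (Set.Icc a b) c →
      g' c = 0 := by
    intro a b c ha hc hmin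
    exact (hmin.isLocalMin (Icc_mem_nhds hc.1 hc.2)).hasDerivAt_eq_zero
      (hderiv c (ha.trans hc.1))
  have dmax : ∀ a b c : ℝ, 0 < a → c ∈ Set.Ioo a b → IsMaxOn g (Set.Icc a b) c →
      g' c = 0 := by
    intro a b c ha hc hm
    exact (hm.isLocalMax (Icc_mem_nhds hc.1 hc.2)).hasDerivAt_eq_zero
      (hderiv c (ha.trans hc.1))
  -- no interior minimum on a compact interval can exist
  have no_min : ∀ a b c : ℝ, 0 < a → c ∈ Set.Ioo a b → IsMinOn g (Set.Icc a b) c →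
      False := by
    intro a b c ha hc hmin
    obtain ⟨ε, hε, hlt⟩ := hmax c (ha.trans hc.1) (dmin a b c ha hc hmin)
    set t := min (c + ε / 2) ((c + b) / 2) with ht
    have hct : c < t := lt_min (by linarith) (by nlinarith [hc.2])
    have htb : t ≤ b := le_trans (min_le_right _ _) (by nlinarith [hc.2])
    have h0 : (0:ℝ) < c := ha.trans hc.1
    have htI : t ∈ Set.Icc a b := ⟨le_of_lt (hc.1.trans hct), htb⟩
    have hdist : |t - c| < ε := by
      rw [abs_lt]
      constructor
      · linarith
      · have : t ≤ c + ε / 2 := min_le_left _ _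
        linarith
    have h1 : g t < g c := hlt t (h0.trans hct) (ne_of_gt hct) hdist
    have h2 : g c ≤ g t := hmin htI
    linarith
  -- strictly below a critical point s inside (u, s) there is a point with smaller value
  have below : ∀ u s : ℝ, 0 < u → u < s → g' s = 0 →
      ∃ t ∈ Set.Ioo u s, g t < g s := by
    intro u s hu hus hs'
    obtain ⟨ε, hε, hlt⟩ := hmax s (hu.trans hus) hs'
    refine ⟨max (s - ε / 2) ((u + s) / 2), ⟨lt_max_of_lt_right (by linarith),
      max_lt (by linarith) (by linarith)⟩, ?_⟩
    set t := max (s - ε / 2) ((u + s) / 2) with ht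
    have hts : t < s := max_lt (by linarith) (by linarith)
    have h0 : (0:ℝ) < t := lt_of_lt_of_le (by linarith : (0:ℝ) < (u + s) / 2)
      (le_max_right _ _)
    have hdist : |t - s| < ε := by
      rw [abs_lt]
      constructor
      · have : s - ε / 2 ≤ t := le_max_left _ _
        linarith
      · linarith
    exact hlt t h0 (ne_of_lt hts) hdist
  -- strictly above a critical point s inside (s, v) there is a point with smaller value
  have above : ∀ s v : ℝ, 0 < s → s < v → g' s = 0 →
      ∃ t ∈ Set.Ioo s v, g t < g s := by
    intro s v hs hsv hs'
    obtain ⟨ε, hε, hlt⟩ := hmax s hs hs'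
    refine ⟨min (s + ε / 2) ((s + v) / 2), ⟨lt_min (by linarith) (by linarith),
      lt_of_le_of_lt (min_le_right _ _) (by linarith)⟩, ?_⟩
    set t := min (s + ε / 2) ((s + v) / 2) with ht
    have hst : s < t := lt_min (by linarith) (by linarith)
    have hdist : |t - s| < ε := by
      rw [abs_lt]
      constructor
      · linarith
      · have : t ≤ s + ε / 2 := min_le_left _ _
        linarith
    exact hlt t (hs.trans hst) (ne_of_gt hst) hdist
  -- uniqueness of critical points
  have uniq : ∀ s₁ ∈ Set.Ioi (0:ℝ), ∀ s₂ ∈ Set.Ioi (0:ℝ), g' s₁ = 0 → g' s₂ = 0 →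
      s₁ = s₂ := by
    have key : ∀ s₁ s₂ : ℝ, 0 < s₁ → s₁ < s₂ → g' s₁ = 0 → g' s₂ = 0 → False := by
      intro s₁ s₂ h₁ h₁₂ hd₁ hd₂
      obtain ⟨c, hcI, hmin⟩ := isCompact_Icc.exists_isMinOn
        (Set.nonempty_Icc.2 h₁₂.le) (hC s₁ s₂ h₁)
      obtain ⟨t₁, ht₁I, ht₁⟩ := above s₁ s₂ h₁ h₁₂ hd₁
      obtain ⟨t₂, ht₂I, ht₂⟩ := below s₁ s₂ h₁ h₁₂ hd₂
      have hc1 : g c ≤ g t₁ := hmin ⟨ht₁I.1.le, ht₁I.2.le⟩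
      have hc2 : g c ≤ g t₂ := hmin ⟨ht₂I.1.le, ht₂I.2.le⟩
      have hne1 : c ≠ s₁ := by intro h; rw [h] at hc1; linarith
      have hne2 : c ≠ s₂ := by intro h; rw [h] at hc2; linarith
      exact no_min s₁ s₂ c h₁ ⟨lt_of_le_of_ne hcI.1 (Ne.symm hne1),
        lt_of_le_of_ne hcI.2 hne2⟩ hmin
    intro s₁ hs₁ s₂ hs₂ hd₁ hd₂
    rcases lt_trichotomy s₁ s₂ with h | h | h
    · exact absurd (key s₁ s₂ hs₁ h hd₁ hd₂) (by simp)
    · exact h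
    · exact absurd (key s₂ s₁ hs₂ h hd₂ hd₁) (by simp)
  refine ⟨uniq, ?_⟩
  intro htend s₀ hs₀ hd₀ _ s hs
  by_contra hcon
  push_neg at hcon
  have hs₀0 : (0:ℝ) < s₀ := hs₀
  have hs0 : (0:ℝ) < s := hs
  rcases lt_trichotomy s s₀ with h | h | h
  · -- s < s₀ : interior minimum on [s, s₀]
    obtain ⟨c, hcI, hmin⟩ := isCompact_Icc.exists_isMinOn
      (Set.nonempty_Icc.2 h.le) (hC s s₀ hs0)
    obtain ⟨t, htI, ht⟩ := below s s₀ hs0 h hd₀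
    have hc1 : g c ≤ g t := hmin ⟨htI.1.le, htI.2.le⟩
    have hc0 : g c ≤ g s₀ := hmin ⟨h.le, le_refl _⟩
    have hne1 : c ≠ s := by intro hh; rw [hh] at hc0; linarith
    have hne2 : c ≠ s₀ := by intro hh; rw [hh] at hc1; linarith
    exact no_min s s₀ c hs0 ⟨lt_of_le_of_ne hcI.1 (Ne.symm hne1),
      lt_of_le_of_ne hcI.2 hne2⟩ hmin
  · exact hcon.ne (by rw [h])
  · -- s₀ < s : interior maximum on [s₀, M]
    obtain ⟨M, hM⟩ := Filter.eventually_atTop.1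
      (htend.eventually (Filter.eventually_lt_atBot (g s₀)))
    set N := max M (s + 1) with hN
    have hsN : s < N := lt_of_lt_of_le (by linarith) (le_max_right _ _)
    have hgN : g N < g s₀ := hM N (le_max_left _ _)
    obtain ⟨c, hcI, hmx⟩ := isCompact_Icc.exists_isMaxOn
      (Set.nonempty_Icc.2 (h.le.trans hsN.le)) (hC s₀ N hs₀0)
    have hcs : g s ≤ g c := hmx ⟨h.le, hsN.le⟩
    have hne1 : c ≠ s₀ := by intro hh; rw [hh] at hcs; linarith
    have hne2 : c ≠ N := by intro hh; rw [hh] at hcs; linarith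
    have hcIoo : c ∈ Set.Ioo s₀ N := ⟨lt_of_le_of_ne hcI.1 (Ne.symm hne1),
      lt_of_le_of_ne hcI.2 hne2⟩
    have hdc : g' c = 0 := dmax s₀ N c hs₀0 hcIoo hmx
    have : c = s₀ := uniq c (hs₀0.trans hcIoo.1) s₀ hs₀ hdc hd₀
    exact hne1 this
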